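/- Let M be a graded module over Z[v] (v of positive degree) such that for each degree d there exists N(d) with (v^{N(d)} M ∩ tors_v M)^d = 0, where tors_v M is the submodule of elements annihilated by some power of v. Then the following are equivalent: (1) the v-torsion equals the v-annihilated submodule, ann_v M = tors_v M; (2) the natural map ann_v M → (tors_v M)/v·(tors_v M) is injective; (3) this map is surjective. -/

import Mathlib

open Polynomial

section aux
variable {M : Type} [AddCommGroup M] [Module (Polynomial ℤ) M]
  (k : ℤ) (ℳ : ℤ → Submodule ℤ M) [DirectSum.Decomposition ℳ]

lemma decompose_X_smul
    (hv : ∀ d : ℤ, ∀ x ∈ ℳ d, (X : Polynomial ℤ) • x ∈ ℳ (d + k))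
    (x : M) (i : ℤ) :
    (DirectSum.decompose ℳ ((X : Polynomial ℤ) • x) (i + k) : M)
      = (X : Polynomial ℤ) • (DirectSum.decompose ℳ x i : M) := by
  induction x using DirectSum.Decomposition.inductionOn ℳ with
  | zero => simp
  | @homogeneous j m =>
      rcases m with ⟨m, hm⟩
      by_cases h : j = i
      · subst h
        rw [DirectSum.decompose_of_mem_same ℳ hm,
          DirectSum.decompose_of_mem_same ℳ (hv _ _ hm)]
      · rw [DirectSum.decompose_of_mem_ne ℳ hm h,
          DirectSum.decompose_of_mem_ne ℳ (hv _ _ hm) (by omega), smul_zero]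
  | add a b ha hb =>
      rw [smul_add, DirectSum.decompose_add, DirectSum.decompose_add]
      simp only [DirectSum.add_apply, Submodule.coe_add, ha, hb, smul_add]

lemma decompose_X_pow_smul
    (hv : ∀ d : ℤ, ∀ x ∈ ℳ d, (X : Polynomial ℤ) • x ∈ ℳ (d + k))
    (n : ℕ) (x : M) (i : ℤ) :
    (DirectSum.decompose ℳ ((X : Polynomial ℤ) ^ n • x) (i + n * k) : M)
      = (X : Polynomial ℤ) ^ n • (DirectSum.decompose ℳ x i : M) := by
  induction n with
  | zero =>
      have h0 : i + ((0:ℕ) : ℤ) * k = i := by push_cast; ring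
      rw [h0, pow_zero, one_smul, one_smul]
  | succ n ih =>
      have h1 : (i + (n : ℤ) * k) + k = i + ((n : ℕ) + 1 : ℕ) * k := by push_cast; ring
      rw [← h1, pow_succ', mul_smul, decompose_X_smul k ℳ hv, ih, mul_smul]
end aux

/-- Let `M` be a graded module over `ℤ[v]` (with `v` of positive degree `k`), graded by an
internal direct sum decomposition `ℳ`, such that for each degree `d` there exists `N(d)` with
`(v^(N(d)) M ∩ tors_v M)^d = 0`. Then the following are equivalent: (1) `ann_v M = tors_v M`;
(2) the natural map `ann_v M → (tors_v M)/v` is injective; (3) this map is surjective. -/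
theorem stmt15 (M : Type) [AddCommGroup M] [Module (Polynomial ℤ) M]
    (k : ℤ) (hk : 0 < k) (ℳ : ℤ → Submodule ℤ M)
    (hdecomp : DirectSum.IsInternal ℳ)
    (hv : ∀ d : ℤ, ∀ x ∈ ℳ d, (X : Polynomial ℤ) • x ∈ ℳ (d + k))
    (hN : ∀ d : ℤ, ∃ N : ℕ, ∀ x ∈ ℳ d,
      (∃ m : M, x = (X : Polynomial ℤ) ^ N • m) →
      (∃ n : ℕ, (X : Polynomial ℤ) ^ n • x = 0) → x = 0) :
    ((∀ x : M, (∃ n : ℕ, (X : Polynomial ℤ) ^ n • x = 0) → (X : Polynomial ℤ) • x = 0) ↔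
      (∀ x : M, (X : Polynomial ℤ) • x = 0 →
        (∃ y : M, (∃ n : ℕ, (X : Polynomial ℤ) ^ n • y = 0) ∧ x = (X : Polynomial ℤ) • y) →
        x = 0)) ∧
    ((∀ x : M, (∃ n : ℕ, (X : Polynomial ℤ) ^ n • x = 0) → (X : Polynomial ℤ) • x = 0) ↔
      (∀ x : M, (∃ n : ℕ, (X : Polynomial ℤ) ^ n • x = 0) →
        ∃ a y : M, (X : Polynomial ℤ) • a = 0 ∧
          (∃ n : ℕ, (X : Polynomial ℤ) ^ n • y = 0) ∧ x = a + (X : Polynomial ℤ) • y)) := by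
  classical
  haveI : DirectSum.Decomposition ℳ := hdecomp.chooseDecomposition
  constructor
  · constructor
    · -- (1) → (2)
      intro hA x hx ⟨y, hyt, hxy⟩
      rw [hxy, hA y hyt]
    · -- (2) → (1)
      intro hB
      have Q : ∀ n : ℕ, ∀ x : M, (X : Polynomial ℤ) ^ (n+1) • x = 0 →
          (X : Polynomial ℤ) • x = 0 := by
        intro n
        induction n with
        | zero => intro x hx; simpa using hx
        | succ n ih =>
            intro x hx
            have hz : (X : Polynomial ℤ) • ((X : Polynomial ℤ) ^ (n+1) • x) = 0 := by
              rw [← mul_smul, ← pow_succ']; exact hx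
            have hzt : (X : Polynomial ℤ) ^ (n+1) • x = 0 := by
              apply hB _ hz
              refine ⟨(X : Polynomial ℤ) ^ n • x, ⟨2, ?_⟩, ?_⟩
              · rw [← mul_smul, ← pow_add]
                convert hx using 2
                ring
              · rw [← mul_smul, ← pow_succ']
            exact ih x hzt
      intro x ⟨n, hn⟩
      apply Q n
      rw [pow_succ', mul_smul, hn, smul_zero]
  · constructor
    · -- (1) → (3)
      intro hA x hx
      exact ⟨x, 0, hA x hx, ⟨0, by simp⟩, by simp⟩
    · -- (3) → (1)
      intro hC
      have iter : ∀ (N : ℕ) (x : M), (∃ n : ℕ, (X : Polynomial ℤ) ^ n • x = 0) →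
          ∃ s y : M, (X : Polynomial ℤ) • s = 0 ∧
            (∃ n : ℕ, (X : Polynomial ℤ) ^ n • y = 0) ∧
            x = s + (X : Polynomial ℤ) ^ N • y := by
        intro N
        induction N with
        | zero => intro x hx; exact ⟨0, x, smul_zero _, hx, by simp⟩
        | succ N ih =>
            intro x hx
            obtain ⟨s, y, hs, hy, hxy⟩ := ih x hx
            obtain ⟨a, y', ha, hy', hyy⟩ := hC y hy
            refine ⟨s + (X : Polynomial ℤ) ^ N • a, y', ?_, hy', ?_⟩
            · rw [smul_add, hs, zero_add, ← mul_smul, mul_comm, mul_smul, ha, smul_zero]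
            · rw [hxy, hyy, smul_add, add_assoc, ← mul_smul, ← pow_succ]
      have hom : ∀ d : ℤ, ∀ x ∈ ℳ d, (∃ n : ℕ, (X : Polynomial ℤ) ^ n • x = 0) →
          (X : Polynomial ℤ) • x = 0 := by
        intro d x hxd hx
        obtain ⟨N, hNspec⟩ := hN (d + k)
        obtain ⟨s, y, hs, hy, hxy⟩ := iter N x hx
        have hvx : (X : Polynomial ℤ) • x
            = (X : Polynomial ℤ) ^ N • ((X : Polynomial ℤ) • y) := by
          rw [hxy, smul_add, hs, zero_add, ← mul_smul, mul_comm, mul_smul]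
        apply hNspec _ (hv d x hxd) ⟨(X : Polynomial ℤ) • y, hvx⟩
        obtain ⟨n, hn⟩ := hx
        exact ⟨n, by rw [← mul_smul, mul_comm, mul_smul, hn, smul_zero]⟩
      intro x hx
      obtain ⟨n, hn⟩ := hx
      have hcomp : ∀ i : ℤ,
          (X : Polynomial ℤ) ^ n • (DirectSum.decompose ℳ x i : M) = 0 := by
        intro i
        rw [← decompose_X_pow_smul k ℳ hv n x i, hn]
        simp
      conv_lhs => rw [← DirectSum.sum_support_decompose ℳ x]
      rw [Finset.smul_sum]
      apply Finset.sum_eq_zero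
      intro i _
      exact hom i _ (DirectSum.decompose ℳ x i).2 ⟨n, hcomp i⟩
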